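/- Let k be a field and e ≥ 2 an integer. In the ring R = k[x_1, …, x_e]/((x_1²) + (x_i x_j : 2 ≤ i ≤ j ≤ e)), the annihilator of x_1 equals the ideal (x_1); in particular x_1 is an exact zero divisor in R. Moreover R has Hilbert series 1 + eτ + (e−1)τ². -/

import Mathlib

open MvPolynomial

set_option synthInstance.maxHeartbeats 1000000
set_option maxHeartbeats 1000000

/-- The (composition) length of an `R`-module. -/
noncomputable def moduleLength (R : Type u) [CommRing R] (M : Type v)
    [AddCommGroup M] [Module R M] : WithBot ℕ∞ :=
  Order.krullDim (Submodule R M)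

/-- The annihilator of an element of `R` as an ideal. -/
def annIdeal (R : Type u) [CommRing R] (a : R) : Ideal R :=
  LinearMap.ker (LinearMap.mulLeft R a)

/-- The defining ideal `(x₁²) + (xᵢxⱼ : 2 ≤ i ≤ j ≤ e)` of Example `conca`. -/
noncomputable def I13 (k : Type u) [Field k] (e : ℕ) (he : 2 ≤ e) :
    Ideal (MvPolynomial (Fin e) k) :=
  Ideal.span ({X ⟨0, by omega⟩ ^ 2} ∪
    {p | ∃ i j : Fin e, i ≠ ⟨0, by omega⟩ ∧ j ≠ ⟨0, by omega⟩ ∧ p = X i * X j})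

section Generic

/-- Transfer of submodule lattices along a ring equivalence and a compatible
additive equivalence of modules. -/
def submoduleOrderIsoOfRingEquiv {R S M N : Type*} [CommRing R] [CommRing S]
    [AddCommGroup M] [AddCommGroup N] [Module R M] [Module S N]
    (σ : R ≃+* S) (g : M ≃+ N) (h : ∀ (r : R) (x : M), g (r • x) = σ r • g x) :
    Submodule R M ≃o Submodule S N where
  toFun p :=
    { carrier := g '' p
      add_mem' := by rintro _ _ ⟨x, hx, rfl⟩ ⟨y, hy, rfl⟩
                     exact ⟨x + y, p.add_mem hx hy, map_add g x y⟩
      zero_mem' := ⟨0, p.zero_mem, map_zero g⟩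
      smul_mem' := by rintro s _ ⟨x, hx, rfl⟩
                      refine ⟨σ.symm s • x, p.smul_mem _ hx, ?_⟩
                      rw [h]; simp }
  invFun q :=
    { carrier := ⇑g ⁻¹' q
      add_mem' := by intro x y hx hy
                     simp only [Set.mem_preimage, map_add] at *
                     exact q.add_mem hx hy
      zero_mem' := by simp only [Set.mem_preimage, map_zero]; exact q.zero_mem
      smul_mem' := by intro r x hx
                      simp only [Set.mem_preimage] at *
                      rw [h]; exact q.smul_mem _ hx }
  left_inv p := by ext x; show g x ∈ (g '' p : Set N) ↔ x ∈ p; exact g.injective.mem_set_image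
  right_inv q := by
    ext y
    simp only [Submodule.mem_mk, AddSubmonoid.mem_mk, AddSubsemigroup.mem_mk]
    constructor
    · rintro ⟨x, hx, rfl⟩; exact hx
    · intro hy; exact ⟨g.symm y, by simpa using hy, by simp⟩
  map_rel_iff' {p q} := by
    constructor
    · intro hle x hx
      have : g x ∈ (g '' q : Set N) := hle ⟨x, hx, rfl⟩
      rcases this with ⟨y, hy, hxy⟩
      rwa [g.injective hxy] at hy
    · rintro hle y ⟨x, hx, rfl⟩
      exact ⟨x, hle hx, rfl⟩

theorem krullDim_submodule_eq_finrank (K V : Type*) [DivisionRing K] [AddCommGroup V]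
    [Module K V] [FiniteDimensional K V] :
    Order.krullDim (Submodule K V) = ((Module.finrank K V : ℕ∞) : WithBot ℕ∞) := by
  apply le_antisymm
  · rw [Order.krullDim]
    apply iSup_le
    intro p
    have key : ∀ n (hn : n < p.length + 1), n ≤ Module.finrank K (p ⟨n, hn⟩) := by
      intro n
      induction n with
      | zero => intro _; exact Nat.zero_le _
      | succ m ih =>
        intro hn
        have h1 := ih (by omega)
        have hlt : p ⟨m, by omega⟩ < p ⟨m + 1, hn⟩ := p.strictMono (by simp [Fin.lt_def])
        have := Submodule.finrank_lt_finrank_of_lt hlt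
        omega
    have h2 : p.length ≤ Module.finrank K (p ⟨p.length, by omega⟩) := key _ _
    have h3 := Submodule.finrank_le (p ⟨p.length, by omega⟩)
    have : p.length ≤ Module.finrank K V := le_trans h2 h3
    exact_mod_cast Nat.cast_le.mpr this
  · set n := Module.finrank K V with hn
    let b := Module.finBasis K V
    let p : LTSeries (Submodule K V) :=
      { length := n
        toFun := fun i => Submodule.span K (b '' {j : Fin n | (j : ℕ) < (i : ℕ)})
        step := by
          intro i
          show (_ : Submodule K V) < _
          apply lt_of_le_of_ne
          · apply Submodule.span_mono
            apply Set.image_mono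
            intro j hj
            simp only [Set.mem_setOf_eq, Fin.coe_castSucc, Fin.val_succ] at *
            exact Nat.lt_succ_of_lt hj
          · intro hEq
            beta_reduce at hEq
            have hi : b ⟨(i : ℕ), i.isLt⟩ ∈
                Submodule.span K (b '' {j : Fin n | (j : ℕ) < ((i.succ : Fin (n+1)) : ℕ)}) :=
              Submodule.subset_span ⟨⟨(i : ℕ), i.isLt⟩, Nat.lt_succ_self _, rfl⟩
            rw [← hEq] at hi
            exact b.linearIndependent.notMem_span_image (by exact lt_irrefl (i : ℕ)) hi }
    have := Order.LTSeries.length_le_krullDim p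
    refine le_trans ?_ this
    exact_mod_cast le_refl _

end Generic

/-- Explicit model of `k[x]/((x₀²)+(xᵢxⱼ : i,j ≠ 0))`:
components `a` (constant term), `b i` (coefficient of `xᵢ`),
`c j` (coefficient of `x₀xⱼ`, `j ≠ 0`). -/
@[ext] structure Am (k : Type u) (e : ℕ) [NeZero e] where
  a : k
  b : Fin e → k
  c : {j : Fin e // j ≠ 0} → k

namespace Am

variable {k : Type u} [Field k] {e : ℕ} [NeZero e]

instance : Zero (Am k e) := ⟨⟨0, 0, 0⟩⟩
instance : Add (Am k e) := ⟨fun u v => ⟨u.a + v.a, u.b + v.b, u.c + v.c⟩⟩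
instance : Neg (Am k e) := ⟨fun u => ⟨-u.a, -u.b, -u.c⟩⟩
instance : SMul k (Am k e) := ⟨fun r u => ⟨r * u.a, r • u.b, r • u.c⟩⟩
instance : One (Am k e) := ⟨⟨1, 0, 0⟩⟩
instance : Mul (Am k e) :=
  ⟨fun u v => ⟨u.a * v.a, u.a • v.b + v.a • u.b,
    u.a • v.c + v.a • u.c + fun j => u.b 0 * v.b j.1 + v.b 0 * u.b j.1⟩⟩

@[simp] lemma zero_a : (0 : Am k e).a = 0 := rfl
@[simp] lemma zero_b : (0 : Am k e).b = 0 := rfl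
@[simp] lemma zero_c : (0 : Am k e).c = 0 := rfl
@[simp] lemma add_a (u v : Am k e) : (u + v).a = u.a + v.a := rfl
@[simp] lemma add_b (u v : Am k e) : (u + v).b = u.b + v.b := rfl
@[simp] lemma add_c (u v : Am k e) : (u + v).c = u.c + v.c := rfl
@[simp] lemma neg_a (u : Am k e) : (-u).a = -u.a := rfl
@[simp] lemma neg_b (u : Am k e) : (-u).b = -u.b := rfl
@[simp] lemma neg_c (u : Am k e) : (-u).c = -u.c := rfl
@[simp] lemma smul_a (r : k) (u : Am k e) : (r • u).a = r * u.a := rfl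
@[simp] lemma smul_b (r : k) (u : Am k e) : (r • u).b = r • u.b := rfl
@[simp] lemma smul_c (r : k) (u : Am k e) : (r • u).c = r • u.c := rfl
@[simp] lemma one_a : (1 : Am k e).a = 1 := rfl
@[simp] lemma one_b : (1 : Am k e).b = 0 := rfl
@[simp] lemma one_c : (1 : Am k e).c = 0 := rfl
@[simp] lemma mul_a (u v : Am k e) : (u * v).a = u.a * v.a := rfl
@[simp] lemma mul_b (u v : Am k e) : (u * v).b = u.a • v.b + v.a • u.b := rfl
@[simp] lemma mul_c (u v : Am k e) :
    (u * v).c = u.a • v.c + v.a • u.c + fun j => u.b 0 * v.b j.1 + v.b 0 * u.b j.1 := rfl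

instance : AddCommGroup (Am k e) where
  add_assoc u v w := by ext <;> simp <;> try ring
  zero_add u := by ext <;> simp
  add_zero u := by ext <;> simp
  add_comm u v := by ext <;> simp <;> try ring
  neg_add_cancel u := by ext <;> simp
  nsmul := nsmulRec
  zsmul := zsmulRec

instance : CommRing (Am k e) :=
  { (inferInstance : AddCommGroup (Am k e)) with
    mul := (· * ·),
    one := (1 : Am k e),
    mul_assoc := fun u v w => by ext <;> simp <;> try ring,
    one_mul := fun u => by ext <;> simp,
    mul_one := fun u => by ext <;> simp,
    left_distrib := fun u v w => by ext <;> simp <;> try ring,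
    right_distrib := fun u v w => by ext <;> simp <;> try ring,
    mul_comm := fun u v => by ext <;> simp <;> try ring,
    zero_mul := fun u => by ext <;> simp,
    mul_zero := fun u => by ext <;> simp }

instance : Module k (Am k e) where
  one_smul u := by ext <;> simp
  mul_smul r s u := by ext <;> simp <;> try ring
  smul_zero r := by ext <;> simp
  smul_add r u v := by ext <;> simp <;> try ring
  add_smul r s u := by ext <;> simp <;> try ring
  zero_smul u := by ext <;> simp

instance : Algebra k (Am k e) := Algebra.ofModule
  (fun r u v => by ext <;> simp <;> try ring)
  (fun r u v => by ext <;> simp <;> try ring)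

@[simp] lemma algebraMap_a (r : k) : (algebraMap k (Am k e) r).a = r := by
  show (r • (1 : Am k e)).a = r; simp
@[simp] lemma algebraMap_b (r : k) : (algebraMap k (Am k e) r).b = 0 := by
  show (r • (1 : Am k e)).b = 0; simp
@[simp] lemma algebraMap_c (r : k) : (algebraMap k (Am k e) r).c = 0 := by
  show (r • (1 : Am k e)).c = 0; simp


/-! ### Coordinate functionals and generators -/

variable (k e) in
/-- The constant-coefficient functional. -/
def aF : Am k e →ₗ[k] k where
  toFun u := u.a
  map_add' u v := rfl
  map_smul' r u := rfl

variable (k e) in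
/-- The linear-coefficient functionals. -/
def bF (i : Fin e) : Am k e →ₗ[k] k where
  toFun u := u.b i
  map_add' u v := rfl
  map_smul' r u := rfl

variable (k e) in
/-- The quadratic-coefficient functionals. -/
def cF (j : {j : Fin e // j ≠ 0}) : Am k e →ₗ[k] k where
  toFun u := u.c j
  map_add' u v := rfl
  map_smul' r u := rfl

@[simp] lemma aF_apply (u : Am k e) : aF k e u = u.a := rfl
@[simp] lemma bF_apply (i : Fin e) (u : Am k e) : bF k e i u = u.b i := rfl
@[simp] lemma cF_apply (j : {j : Fin e // j ≠ 0}) (u : Am k e) : cF k e j u = u.c j := rfl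

variable (k) in
/-- The images of the variables. -/
def gen (i : Fin e) : Am k e := ⟨0, Pi.single i 1, 0⟩

variable (k) in
/-- The images of the quadratic monomials `x₀xⱼ`. -/
def cgen (j : {j : Fin e // j ≠ 0}) : Am k e := ⟨0, 0, Pi.single j 1⟩

@[simp] lemma gen_a (i : Fin e) : (gen k i).a = 0 := rfl
@[simp] lemma gen_b (i : Fin e) : (gen k i).b = Pi.single i 1 := rfl
@[simp] lemma gen_c (i : Fin e) : (gen k i).c = 0 := rfl
@[simp] lemma cgen_a (j) : (cgen k (e := e) j).a = 0 := rfl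
@[simp] lemma cgen_b (j) : (cgen k (e := e) j).b = 0 := rfl
@[simp] lemma cgen_c (j) : (cgen k (e := e) j).c = Pi.single j 1 := rfl

lemma gen_zero_mul_gen {j : Fin e} (hj : j ≠ 0) :
    gen k 0 * gen k j = cgen k ⟨j, hj⟩ := by
  ext
  · simp
  · simp
  · rename_i l
    simp only [mul_c, gen_b, gen_c, cgen_c, smul_zero, zero_add, Pi.add_apply]
    have hl : (l : Fin e) ≠ 0 := l.2
    simp only [Pi.single_apply, Pi.zero_apply]
    rw [if_neg (Ne.symm hj), if_neg hl]
    by_cases h : (l : Fin e) = j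
    · rw [if_pos h, if_pos (Subtype.ext h)]; simp
    · rw [if_neg h, if_neg (fun hh => h (congrArg Subtype.val hh))]; ring

lemma gen_mul_gen {i j : Fin e} (hi : i ≠ 0) (hj : j ≠ 0) :
    gen k i * gen k j = 0 := by
  ext
  · simp
  · simp
  · simp only [mul_c, gen_b, gen_c, cgen_c, smul_zero, zero_add, Pi.add_apply, zero_c,
      Pi.zero_apply]
    simp only [Pi.single_apply]
    rw [if_neg (Ne.symm hi), if_neg (Ne.symm hj)]; ring

lemma gen_zero_sq : gen k (0 : Fin e) * gen k 0 = 0 := by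
  ext
  · simp
  · simp
  · rename_i l
    simp only [mul_c, gen_b, gen_c, smul_zero, zero_add, Pi.add_apply, zero_c, Pi.zero_apply]
    simp only [Pi.single_apply]
    rw [if_neg l.2]; ring

lemma mul_cgen (u : Am k e) (j) : u * cgen k j = u.a • cgen k j := by
  ext <;> simp <;> try ring

lemma mul_gen_sub (u : Am k e) (l : Fin e) :
    ((u * gen k l - u.a • gen k l).a = 0) ∧ (u * gen k l - u.a • gen k l).b = 0 := by
  constructor
  · simp [sub_eq_add_neg]
  · funext i; simp [sub_eq_add_neg]

/-- Every element decomposes in terms of the generators. -/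
lemma decomp (u : Am k e) :
    u = u.a • 1 + (∑ i, u.b i • gen k i) + (∑ j, u.c j • cgen k j) := by
  have hb : ∀ (v : Fin e → k) (i : Fin e), (∑ l, v l • gen k l).b i = v i := by
    intro v i
    rw [show (∑ l, v l • gen k l).b i = bF k e i (∑ l, v l • gen k l) from rfl]
    rw [map_sum]
    simp [Pi.single_apply, Finset.sum_ite_eq']
  have hc : ∀ (w : {j : Fin e // j ≠ 0} → k) (j), (∑ l, w l • cgen k l).c j = w j := by
    intro w j
    rw [show (∑ l, w l • cgen k l).c j = cF k e j (∑ l, w l • cgen k l) from rfl]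
    rw [map_sum]
    simp [Pi.single_apply, Finset.sum_ite_eq']
  have ha : ∀ (v : Fin e → k), (∑ l, v l • gen k l).a = 0 := by
    intro v
    rw [show (∑ l, v l • gen k l).a = aF k e (∑ l, v l • gen k l) from rfl, map_sum]
    simp
  have ha' : ∀ (w : {j : Fin e // j ≠ 0} → k), (∑ l, w l • cgen k l).a = 0 := by
    intro w
    rw [show (∑ l, w l • cgen k l).a = aF k e (∑ l, w l • cgen k l) from rfl, map_sum]
    simp
  have hbc : ∀ (w : {j : Fin e // j ≠ 0} → k) (i), (∑ l, w l • cgen k l).b i = 0 := by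
    intro w i
    rw [show (∑ l, w l • cgen k l).b i = bF k e i (∑ l, w l • cgen k l) from rfl, map_sum]
    simp
  have hcb : ∀ (v : Fin e → k) (j), (∑ l, v l • gen k l).c j = 0 := by
    intro v j
    rw [show (∑ l, v l • gen k l).c j = cF k e j (∑ l, v l • gen k l) from rfl, map_sum]
    simp
  ext
  · simp [ha, ha']
  · simp [hb, hbc]
  · simp [hc, hcb]


/-! ### Ideals of `Am` -/

variable (k e) in
/-- The a-coordinate as a ring homomorphism. -/
def aRH : Am k e →+* k where
  toFun u := u.a
  map_one' := rfl
  map_mul' u v := rfl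
  map_zero' := rfl
  map_add' u v := rfl

variable (k e) in
/-- The maximal ideal of `Am`. -/
def mA : Ideal (Am k e) := Ideal.span (Set.range (gen k))

lemma mem_mA_iff (u : Am k e) : u ∈ mA k e ↔ u.a = 0 := by
  constructor
  · intro hu
    have : mA k e ≤ RingHom.ker (aRH k e) := by
      rw [mA, Ideal.span_le]
      rintro _ ⟨i, rfl⟩
      simp [RingHom.mem_ker, aRH]
    exact this hu
  · intro hu
    rw [decomp u, hu, zero_smul, zero_add]
    apply Ideal.add_mem
    · exact Ideal.sum_mem _ fun i _ =>
        Submodule.smul_of_tower_mem _ _ (Ideal.subset_span ⟨i, rfl⟩)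
    · apply Ideal.sum_mem _ fun j _ => ?_
      apply Submodule.smul_of_tower_mem
      rw [← gen_zero_mul_gen j.2]
      exact Ideal.mul_mem_left _ _ (Ideal.subset_span ⟨j.1, rfl⟩)

variable (k e) in
/-- The square of the maximal ideal, explicitly. -/
def B2 : Ideal (Am k e) where
  carrier := {u | u.a = 0 ∧ u.b = 0}
  add_mem' := by rintro u v ⟨h1, h2⟩ ⟨h3, h4⟩; constructor <;> simp [h1, h2, h3, h4]
  zero_mem' := ⟨rfl, rfl⟩
  smul_mem' := by rintro v u ⟨h1, h2⟩
                  constructor <;> simp [smul_eq_mul, h1, h2]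

lemma mem_B2_iff (u : Am k e) : u ∈ B2 k e ↔ u.a = 0 ∧ u.b = 0 := Iff.rfl

lemma mA_sq : (mA k e) ^ 2 = B2 k e := by
  apply le_antisymm
  · rw [pow_two, Ideal.mul_le]
    intro u hu v hv
    rw [mem_mA_iff] at hu hv
    exact ⟨by simp [hu, hv], by funext i; simp [hu, hv]⟩
  · rintro u ⟨h1, h2⟩
    have : u = ∑ j, u.c j • cgen k j := by
      conv_lhs => rw [decomp u, h1, h2]
      simp
    rw [this]
    apply Ideal.sum_mem _ fun j _ => ?_
    apply Submodule.smul_of_tower_mem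
    rw [← gen_zero_mul_gen j.2, pow_two]
    exact Ideal.mul_mem_mul (Ideal.subset_span ⟨_, rfl⟩) (Ideal.subset_span ⟨_, rfl⟩)

lemma mA_cube : (mA k e) ^ 3 = ⊥ := by
  rw [pow_succ, mA_sq, eq_bot_iff, Ideal.mul_le]
  intro u hu v hv
  rw [mem_B2_iff] at hu
  rw [mem_mA_iff] at hv
  have : u * v = 0 := by
    ext
    · simp [hu.1, hv]
    · simp [hu.1, hv, hu.2]
    · simp [hu.1, hv, hu.2]
  simp [this]

lemma mul_gen_zero_eq_zero_iff (u : Am k e) :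
    u * gen k 0 = 0 ↔ u.a = 0 ∧ ∀ j : Fin e, j ≠ 0 → u.b j = 0 := by
  constructor
  · intro h
    have hb0 : (u * gen k 0).b 0 = (0 : Am k e).b 0 := by rw [h]
    have hc : ∀ j : {j : Fin e // j ≠ 0}, (u * gen k 0).c j = (0 : Am k e).c j := by
      intro j; rw [h]
    have ha : u.a = 0 := by simpa using hb0
    refine ⟨ha, fun j hj => ?_⟩
    simpa [Pi.single_apply, hj] using hc ⟨j, hj⟩
  · rintro ⟨ha, hb⟩
    ext
    · simp
    · simp [ha]
    · rename_i l
      simp [Pi.single_apply, l.2, hb l.1 l.2]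

lemma mem_span_gen_zero_iff (u : Am k e) :
    u ∈ Ideal.span {gen k (0 : Fin e)} ↔ u.a = 0 ∧ ∀ j : Fin e, j ≠ 0 → u.b j = 0 := by
  rw [Ideal.mem_span_singleton']
  constructor
  · rintro ⟨v, rfl⟩
    constructor
    · simp
    · intro j hj
      simp [Pi.single_apply, hj]
  · rintro ⟨ha, hb⟩
    refine ⟨⟨u.b 0, fun i => if h : i ≠ 0 then u.c ⟨i, h⟩ else 0, 0⟩, ?_⟩
    ext
    · simp [ha]
    · rename_i i
      by_cases h : i = 0
      · subst h; simp
      · simp [Pi.single_apply, h, hb i h]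
    · rename_i l
      simp [Pi.single_apply, l.2]

lemma gen_zero_ne_zero : gen k (0 : Fin e) ≠ 0 := by
  intro h
  have : (gen k (0 : Fin e)).b 0 = (0 : Am k e).b 0 := by rw [h]
  simp at this

lemma not_isUnit_gen_zero : ¬ IsUnit (gen k (0 : Fin e)) := by
  intro h
  rcases h.exists_left_inv with ⟨v, hv⟩
  have : (v * gen k 0).a = (1 : Am k e).a := by rw [hv]
  simp at this


/-! ### Dimension of `Am` -/

variable (k e) in
/-- `Am` is linearly equivalent to a product. -/
def toProd : Am k e ≃ₗ[k] k × (Fin e → k) × ({j : Fin e // j ≠ 0} → k) where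
  toFun u := (u.a, u.b, u.c)
  map_add' u v := rfl
  map_smul' r u := rfl
  invFun p := ⟨p.1, p.2.1, p.2.2⟩
  left_inv u := rfl
  right_inv p := rfl

lemma card_ne_zero : Fintype.card {j : Fin e // j ≠ 0} = e - 1 := by
  have h1 : Fintype.card {j : Fin e // ¬ j = 0} = Fintype.card (Fin e) -
      Fintype.card {j : Fin e // j = 0} := Fintype.card_subtype_compl _
  have h2 : Fintype.card {j : Fin e // j = 0} = 1 := Fintype.card_subtype_eq (0 : Fin e)
  simpa [h2] using h1

instance : FiniteDimensional k (Am k e) :=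
  Module.Finite.equiv (toProd k e).symm

lemma finrank_Am (he : 2 ≤ e) : Module.finrank k (Am k e) = 2 * e := by
  rw [LinearEquiv.finrank_eq (toProd k e)]
  rw [Module.finrank_prod, Module.finrank_prod, Module.finrank_pi, Module.finrank_pi,
    Module.finrank_self, card_ne_zero]
  simp [Fintype.card_fin]
  omega


/-! ### The chain of ideals -/

lemma not_mem_span_of_functional {s : Set (Am k e)} {x : Am k e}
    (f : Am k e →ₗ[k] k) (hfx : f x ≠ 0) (hs : ∀ y ∈ s, f y = 0) :
    x ∉ Submodule.span k s := by
  intro hx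
  have hle : Submodule.span k s ≤ LinearMap.ker f :=
    Submodule.span_le.mpr fun y hy => hs y hy
  exact hfx (hle hx)

variable (k) in
/-- The `2e` elements generating the flag of ideals. -/
def vchain (he : 2 ≤ e) (i : Fin (2 * e)) : Am k e :=
  if h : (i : ℕ) < e - 1 then
    cgen k ⟨⟨(i : ℕ) + 1, by omega⟩, fun h => by
      have := congrArg Fin.val h; simp only [Fin.val_zero] at this; omega⟩
  else if h2 : (i : ℕ) < 2 * e - 1 then gen k ⟨(i : ℕ) - (e - 1), by omega⟩
  else 1

variable (k) in
/-- The spans of initial segments of `vchain`. -/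
def S (he : 2 ≤ e) (i : ℕ) : Submodule k (Am k e) :=
  Submodule.span k (vchain k he '' {j : Fin (2 * e) | (j : ℕ) < i})

lemma cgen_mem_image (he : 2 ≤ e) (l : {j : Fin e // j ≠ 0}) :
    cgen k l ∈ vchain k he '' {j : Fin (2 * e) | (j : ℕ) < e - 1} := by
  have hl : (l : Fin e).val ≠ 0 := fun h => l.2 (Fin.ext (by simpa using h))
  have hlt : ((l : Fin e).val - 1) < 2 * e := by omega
  refine ⟨⟨(l : Fin e).val - 1, hlt⟩, ?_, ?_⟩
  · simp only [Set.mem_setOf_eq]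
    have := (l : Fin e).isLt
    omega
  · rw [vchain, dif_pos (by have := (l : Fin e).isLt; omega : (((l : Fin e).val - 1 : ℕ)) < e - 1)]
    congr 1
    ext
    simp only
    omega

lemma gen_mem_image (he : 2 ≤ e) (l : Fin e) :
    gen k l ∈ vchain k he '' {j : Fin (2 * e) | (j : ℕ) < 2 * e - 1} := by
  have hlt : e - 1 + l.val < 2 * e := by have := l.isLt; omega
  refine ⟨⟨e - 1 + l.val, hlt⟩, ?_, ?_⟩
  · simp only [Set.mem_setOf_eq]
    have := l.isLt
    omega
  · rw [vchain, dif_neg (by show ¬ (e - 1 + l.val < e - 1); omega),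
      dif_pos (by show e - 1 + l.val < 2 * e - 1; have := l.isLt; omega)]
    congr 1
    ext
    simp only
    omega

lemma one_mem_image (he : 2 ≤ e) :
    (1 : Am k e) ∈ vchain k he '' {j : Fin (2 * e) | (j : ℕ) < 2 * e} := by
  refine ⟨⟨2 * e - 1, by omega⟩, by simp only [Set.mem_setOf_eq]; omega, ?_⟩
  rw [vchain, dif_neg (by show ¬ (2 * e - 1 < e - 1); omega),
    dif_neg (by show ¬ (2 * e - 1 < 2 * e - 1); omega)]

lemma B2_le_S (he : 2 ≤ e) {i : ℕ} (hi : e - 1 ≤ i) : (B2 k e : Set (Am k e)) ⊆ S k he i := by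
  rintro u ⟨h1, h2⟩
  have : u = ∑ j, u.c j • cgen k j := by
    conv_lhs => rw [decomp u, h1, h2]
    simp
  rw [this]
  apply Submodule.sum_mem _ fun j _ => Submodule.smul_mem _ _ ?_
  apply Submodule.span_mono (Set.image_mono (fun x hx => ?_)) (Submodule.subset_span
    (cgen_mem_image he j))
  simp only [Set.mem_setOf_eq] at *
  omega

lemma S_top (he : 2 ≤ e) : S k he (2 * e) = ⊤ := by
  rw [eq_top_iff]
  intro u _
  rw [decomp u]
  have himg : ∀ (P : Am k e), P ∈ vchain k he '' {j : Fin (2 * e) | (j : ℕ) < 2 * e - 1} →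
      P ∈ S k he (2 * e) := by
    intro P hP
    apply Submodule.subset_span
    exact Set.image_mono (fun x hx => by simp only [Set.mem_setOf_eq] at *; omega) hP
  refine Submodule.add_mem _ (Submodule.add_mem _ ?_ ?_) ?_
  · exact Submodule.smul_mem _ _ (Submodule.subset_span (one_mem_image he))
  · exact Submodule.sum_mem _ fun i _ => Submodule.smul_mem _ _ (himg _ (gen_mem_image he i))
  · refine Submodule.sum_mem _ fun j _ => Submodule.smul_mem _ _ ?_
    apply Submodule.subset_span
    exact Set.image_mono (fun x hx => by simp only [Set.mem_setOf_eq] at *; omega)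
      (cgen_mem_image he j)

lemma S_mul_stable (he : 2 ≤ e) (i : ℕ) (hi : i ≤ 2 * e) (u : Am k e) :
    ∀ x ∈ S k he i, u * x ∈ S k he i := by
  intro x hx
  induction hx using Submodule.span_induction with
  | mem y hy =>
    obtain ⟨j, hj, rfl⟩ := hy
    simp only [Set.mem_setOf_eq] at hj
    by_cases h1 : (j : ℕ) < e - 1
    · rw [vchain, dif_pos h1, mul_cgen]
      exact Submodule.smul_mem _ _ (Submodule.subset_span ⟨j, hj, by rw [vchain, dif_pos h1]⟩)
    · by_cases h2 : (j : ℕ) < 2 * e - 1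
      · rw [vchain, dif_neg h1, dif_pos h2]
        set l : Fin e := ⟨(j : ℕ) - (e - 1), by omega⟩
        have hd : u * gen k l = u.a • gen k l + (u * gen k l - u.a • gen k l) := by ring
        rw [hd]
        apply Submodule.add_mem
        · exact Submodule.smul_mem _ _ (Submodule.subset_span
            ⟨j, hj, by rw [vchain, dif_neg h1, dif_pos h2]⟩)
        · exact B2_le_S he (by omega) (mul_gen_sub u l)
      · rw [vchain, dif_neg h1, dif_neg h2, mul_one]
        have : i = 2 * e := by omega
        rw [this, S_top he]
        trivial
  | zero => simp
  | add y z _ _ hy hz => simpa [mul_add] using Submodule.add_mem _ hy hz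
  | smul r y _ hy => simpa [mul_smul_comm] using Submodule.smul_mem _ r hy

variable (k) in
/-- The flag of ideals of `Am` of length `2e`. -/
def chainIdeal (he : 2 ≤ e) (i : Fin (2 * e + 1)) : Ideal (Am k e) where
  carrier := S k he i
  add_mem' := fun h1 h2 => Submodule.add_mem _ h1 h2
  zero_mem' := Submodule.zero_mem _
  smul_mem' := fun u x hx => S_mul_stable he i (by omega) u x hx

lemma mem_chainIdeal_iff (he : 2 ≤ e) (i : Fin (2 * e + 1)) (x : Am k e) :
    x ∈ chainIdeal k he i ↔ x ∈ S k he i := Iff.rfl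

lemma chainIdeal_strictMono (he : 2 ≤ e) (i : Fin (2 * e)) :
    chainIdeal k he i.castSucc < chainIdeal k he i.succ := by
  have hle : chainIdeal k he i.castSucc ≤ chainIdeal k he i.succ := by
    intro x hx
    rw [mem_chainIdeal_iff] at *
    refine Submodule.span_mono (Set.image_mono fun y hy => ?_) hx
    simp only [Set.mem_setOf_eq, Fin.coe_castSucc, Fin.val_succ] at *
    omega
  refine lt_of_le_of_ne hle (fun hEq => ?_)
  have hmem : vchain k he i ∈ chainIdeal k he i.succ := by
    rw [mem_chainIdeal_iff]
    exact Submodule.subset_span ⟨i, by simp, rfl⟩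
  rw [← hEq, mem_chainIdeal_iff] at hmem
  revert hmem
  rw [S]
  by_cases h1 : (i : ℕ) < e - 1
  · apply not_mem_span_of_functional (cF k e ⟨⟨(i : ℕ) + 1, by omega⟩, fun h => by
      have := congrArg Fin.val h; simp only [Fin.val_zero] at this; omega⟩)
    · rw [vchain, dif_pos h1]
      simp
    · rintro _ ⟨j, hj, rfl⟩
      simp only [Set.mem_setOf_eq, Fin.coe_castSucc] at hj
      have hj1 : (j : ℕ) < e - 1 := by omega
      rw [vchain, dif_pos hj1]
      simp only [cF_apply, cgen_c]
      rw [Pi.single_apply, if_neg]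
      intro hh
      have := congrArg (fun t => (Subtype.val t).val) hh
      simp only at this
      omega
  · by_cases h2 : (i : ℕ) < 2 * e - 1
    · apply not_mem_span_of_functional (bF k e ⟨(i : ℕ) - (e - 1), by omega⟩)
      · rw [vchain, dif_neg h1, dif_pos h2]
        simp
      · rintro _ ⟨j, hj, rfl⟩
        simp only [Set.mem_setOf_eq, Fin.coe_castSucc] at hj
        by_cases hj1 : (j : ℕ) < e - 1
        · rw [vchain, dif_pos hj1]; simp
        · rw [vchain, dif_neg hj1, dif_pos (by omega)]
          simp only [bF_apply, gen_b]
          rw [Pi.single_apply, if_neg]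
          intro hh
          have := congrArg Fin.val hh
          simp only at this
          omega
    · apply not_mem_span_of_functional (aF k e)
      · rw [vchain, dif_neg h1, dif_neg h2]
        simp
      · rintro _ ⟨j, hj, rfl⟩
        simp only [Set.mem_setOf_eq, Fin.coe_castSucc] at hj
        by_cases hj1 : (j : ℕ) < e - 1
        · rw [vchain, dif_pos hj1]; simp
        · rw [vchain, dif_neg hj1, dif_pos (by omega)]; simp

theorem krullDim_ideal_Am (he : 2 ≤ e) :
    Order.krullDim (Submodule (Am k e) (Am k e)) = ((2 * e : ℕ) : WithBot ℕ∞) := by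
  apply le_antisymm
  · have hsm : StrictMono fun p : Submodule (Am k e) (Am k e) => p.restrictScalars k := by
      intro p q h
      refine lt_of_le_of_ne (fun x hx => h.le hx) (fun hEq => h.ne ?_)
      exact Submodule.restrictScalars_injective k _ _ hEq
    refine le_trans (Order.krullDim_le_of_strictMono _ hsm) ?_
    rw [krullDim_submodule_eq_finrank k (Am k e), finrank_Am he]
    exact_mod_cast le_rfl
  · let p : LTSeries (Submodule (Am k e) (Am k e)) :=
      { length := 2 * e
        toFun := fun i => chainIdeal k he i
        step := fun i => chainIdeal_strictMono he i }
    have := Order.LTSeries.length_le_krullDim p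
    exact_mod_cast this


/-! ### The lattice of submodules of `m²` -/

lemma smul_mSq_eq (u : Am k e) (x : ↥(mA k e ^ 2)) : u • x = u.a • x := by
  have hx : x.1.a = 0 ∧ x.1.b = 0 := by
    exact le_of_eq mA_sq x.2
  apply Subtype.ext
  show u • (x : Am k e) = u.a • (x : Am k e)
  rw [smul_eq_mul]
  ext
  · simp [hx.1]
  · simp [hx.1, hx.2]
  · simp [hx.1, hx.2]

variable (k e) in
/-- Submodules of `m²` over `Am` are the same as `k`-subspaces. -/
def mSqIso1 : Submodule (Am k e) ↥(mA k e ^ 2) ≃o Submodule k ↥(mA k e ^ 2) where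
  toFun p := p.restrictScalars k
  invFun q :=
    { carrier := q
      add_mem' := fun h1 h2 => q.add_mem h1 h2
      zero_mem' := q.zero_mem
      smul_mem' := fun u x hx => by
        rw [smul_mSq_eq]
        exact q.smul_mem _ hx }
  left_inv p := by ext x; rfl
  right_inv q := by ext x; rfl
  map_rel_iff' := Iff.rfl

variable (k e) in
/-- `m²` is linearly equivalent to `k^(e-1)`. -/
def mSqIso2 : ↥(mA k e ^ 2) ≃ₗ[k] ({j : Fin e // j ≠ 0} → k) where
  toFun x := x.1.c
  map_add' x y := rfl
  map_smul' r x := rfl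
  invFun c := ⟨⟨0, 0, c⟩, by rw [mA_sq, mem_B2_iff]; exact ⟨rfl, rfl⟩⟩
  left_inv x := by
    have hx : x.1.a = 0 ∧ x.1.b = 0 := by
      exact le_of_eq mA_sq x.2
    apply Subtype.ext
    ext
    · exact hx.1.symm
    · rw [hx.2]
    · rfl
  right_inv c := rfl

theorem krullDim_submodule_mSq (he : 2 ≤ e) :
    Order.krullDim (Submodule (Am k e) ↥(mA k e ^ 2)) = ((e - 1 : ℕ) : WithBot ℕ∞) := by
  rw [Order.krullDim_eq_of_orderIso ((mSqIso1 k e).trans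
    (Submodule.orderIsoMapComap (mSqIso2 k e)))]
  rw [krullDim_submodule_eq_finrank]
  rw [Module.finrank_pi, card_ne_zero]
  exact_mod_cast rfl

end Am

section Poly

open Am

variable {k : Type u} [Field k] {e : ℕ} [NeZero e]

lemma fin_mk_zero (h : 0 < e) : (⟨0, h⟩ : Fin e) = 0 := by
  ext
  simp

variable (k e) in
/-- Evaluation onto the model. -/
noncomputable def phi : MvPolynomial (Fin e) k →ₐ[k] Am k e :=
  MvPolynomial.aeval (Am.gen k)

@[simp] lemma phi_X (i : Fin e) : phi k e (X i) = Am.gen k i := by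
  simp [phi]

lemma I13_le_ker (he : 2 ≤ e) : ∀ f ∈ I13 k e he, phi k e f = 0 := by
  intro f hf
  have hle : I13 k e he ≤ RingHom.ker (phi k e).toRingHom := by
    rw [I13, Ideal.span_le]
    rintro p hp
    rcases hp with h | ⟨i, j, hi, hj, rfl⟩
    · rcases h with rfl
      rw [SetLike.mem_coe, RingHom.mem_ker]
      rw [fin_mk_zero (by omega)]
      simp only [AlgHom.toRingHom_eq_coe, RingHom.coe_coe, map_pow, phi_X]
      rw [pow_two, gen_zero_sq]
    · rw [SetLike.mem_coe, RingHom.mem_ker]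
      simp only [AlgHom.toRingHom_eq_coe, RingHom.coe_coe, map_mul, phi_X]
      rw [fin_mk_zero (by omega)] at hi hj
      exact gen_mul_gen hi hj
  exact hle hf

variable (k e) in
/-- The linear section of `phi`. -/
noncomputable def PL : Am k e →ₗ[k] MvPolynomial (Fin e) k where
  toFun u := C u.a + (∑ i, C (u.b i) * X i) + ∑ j : {j : Fin e // j ≠ 0}, C (u.c j) * (X 0 * X j.1)
  map_add' u v := by
    simp only [add_a, add_b, add_c, Pi.add_apply, map_add, add_mul, Finset.sum_add_distrib]
    ring
  map_smul' r u := by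
    simp only [smul_a, smul_b, smul_c, Pi.smul_apply, smul_eq_mul, map_mul,
      MvPolynomial.smul_eq_C_mul, mul_add, Finset.mul_sum, RingHom.id_apply]
    refine congrArg₂ (· + ·) (congrArg₂ (· + ·) ?_ (Finset.sum_congr rfl fun x _ => by ring))
      (Finset.sum_congr rfl fun x _ => by ring)
    ring

lemma phi_PL (u : Am k e) : phi k e (PL k e u) = u := by
  have h1 : ∀ (r : k) (p : MvPolynomial (Fin e) k), phi k e (C r * p) = r • phi k e p := by
    intro r p
    rw [map_mul, Algebra.smul_def]
    congr 1
    simp [phi]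
  simp only [PL, LinearMap.coe_mk, AddHom.coe_mk, map_add, map_sum, h1, phi_X, map_mul]
  have h2 : ∀ j : {j : Fin e // j ≠ 0}, Am.gen k 0 * Am.gen k j.1 = Am.cgen k j := by
    intro j
    rw [gen_zero_mul_gen j.2]
  have h3 : phi k e (C u.a) = u.a • 1 := by
    rw [show (C u.a : MvPolynomial (Fin e) k) = algebraMap k _ u.a from rfl]
    rw [AlgHom.commutes, Algebra.algebraMap_eq_smul_one]
  rw [h3]
  conv_rhs => rw [decomp u]
  congr 1
  apply Finset.sum_congr rfl
  intro j _
  rw [h2 j]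

variable (k e) in
/-- The subspace of polynomials reduced modulo `I13` plus `I13`. -/
noncomputable def TT (he : 2 ≤ e) : Submodule k (MvPolynomial (Fin e) k) :=
  LinearMap.range (PL k e) ⊔ Submodule.restrictScalars k (I13 k e he)

lemma C_mem_PL (a : k) : (C a : MvPolynomial (Fin e) k) ∈ LinearMap.range (PL k e) := by
  refine ⟨⟨a, 0, 0⟩, ?_⟩
  simp [PL]

lemma X_mem_PL (i : Fin e) : (X i : MvPolynomial (Fin e) k) ∈ LinearMap.range (PL k e) := by
  refine ⟨⟨0, Pi.single i 1, 0⟩, ?_⟩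
  simp only [PL, LinearMap.coe_mk, AddHom.coe_mk, map_zero, Pi.zero_apply, zero_mul,
    Finset.sum_const_zero, add_zero, zero_add, Pi.single_apply]
  rw [Finset.sum_congr rfl (fun l _ => by rw [apply_ite C, map_one, map_zero, ite_mul,
    one_mul, zero_mul])]
  rw [Finset.sum_ite_eq' Finset.univ i (fun l => X l)]
  simp

lemma X0X_mem_PL {j : Fin e} (hj : j ≠ 0) :
    ((X 0 * X j : MvPolynomial (Fin e) k)) ∈ LinearMap.range (PL k e) := by
  refine ⟨⟨0, 0, Pi.single ⟨j, hj⟩ 1⟩, ?_⟩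
  simp only [PL, LinearMap.coe_mk, AddHom.coe_mk, map_zero, Pi.zero_apply, zero_mul,
    Finset.sum_const_zero, add_zero, zero_add, Pi.single_apply]
  rw [Finset.sum_congr rfl (fun l _ => by rw [apply_ite C, map_one, map_zero, ite_mul,
    one_mul, zero_mul])]
  rw [Finset.sum_ite_eq' Finset.univ (⟨j, hj⟩ : {j : Fin e // j ≠ 0})
    (fun l => X (0 : Fin e) * X l.1)]
  simp

lemma XX_mem_I13 (he : 2 ≤ e) {i j : Fin e} (hi : i ≠ 0) (hj : j ≠ 0) :
    (X i * X j : MvPolynomial (Fin e) k) ∈ I13 k e he := by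
  apply Ideal.subset_span
  right
  exact ⟨i, j, by rw [fin_mk_zero (by omega)]; exact hi,
    by rw [fin_mk_zero (by omega)]; exact hj, rfl⟩

lemma X0sq_mem_I13 (he : 2 ≤ e) :
    ((X 0 : MvPolynomial (Fin e) k) ^ 2) ∈ I13 k e he := by
  apply Ideal.subset_span
  left
  rw [fin_mk_zero (by omega)]
  rfl

lemma TT_top (he : 2 ≤ e) (f : MvPolynomial (Fin e) k) : f ∈ TT k e he := by
  induction f using MvPolynomial.induction_on with
  | C a => exact Submodule.mem_sup_left (C_mem_PL a)
  | add p q hp hq => exact Submodule.add_mem _ hp hq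
  | mul_X p i hp =>
    rcases Submodule.mem_sup.mp hp with ⟨s, hs, g, hg, rfl⟩
    rw [add_mul]
    apply Submodule.add_mem
    · rcases hs with ⟨u, rfl⟩
      have expand : PL k e u * X i = C u.a * X i + (∑ l, C (u.b l) * X l * X i) +
          ∑ j : {j : Fin e // j ≠ 0}, C (u.c j) * (X 0 * X j.1) * X i := by
        simp [PL, add_mul, Finset.sum_mul]
      rw [expand]
      refine Submodule.add_mem _ (Submodule.add_mem _ ?_ ?_) ?_
      · rw [← MvPolynomial.smul_eq_C_mul]
        exact Submodule.mem_sup_left (Submodule.smul_mem _ _ (X_mem_PL i))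
      · refine Submodule.sum_mem _ fun l _ => ?_
        by_cases hl : l = 0
        · subst hl
          by_cases hi : i = 0
          · subst hi
            apply Submodule.mem_sup_right
            rw [mul_assoc, ← pow_two]
            exact Ideal.mul_mem_left _ _ (X0sq_mem_I13 he)
          · rw [mul_assoc, ← MvPolynomial.smul_eq_C_mul]
            exact Submodule.mem_sup_left (Submodule.smul_mem _ _ (X0X_mem_PL hi))
        · by_cases hi : i = 0
          · subst hi
            rw [mul_assoc, mul_comm (X l) (X 0), ← MvPolynomial.smul_eq_C_mul]
            exact Submodule.mem_sup_left (Submodule.smul_mem _ _ (X0X_mem_PL hl))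
          · apply Submodule.mem_sup_right
            rw [mul_assoc]
            exact Ideal.mul_mem_left _ _ (XX_mem_I13 he hl hi)
      · refine Submodule.sum_mem _ fun j _ => ?_
        apply Submodule.mem_sup_right
        by_cases hi : i = 0
        · subst hi
          have : (X 0 * X j.1 * X 0 : MvPolynomial (Fin e) k) = X 0 ^ 2 * X j.1 := by ring
          rw [mul_assoc, this]
          exact Ideal.mul_mem_left _ _ (Ideal.mul_mem_right _ _ (X0sq_mem_I13 he))
        · have : (X 0 * X j.1 * X i : MvPolynomial (Fin e) k) = X 0 * (X j.1 * X i) := by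
            ring
          rw [mul_assoc, this]
          exact Ideal.mul_mem_left _ _ (Ideal.mul_mem_left _ _ (XX_mem_I13 he j.2 hi))
    · exact Submodule.mem_sup_right (Ideal.mul_mem_right _ _ hg)

lemma ker_phi_le (he : 2 ≤ e) (f : MvPolynomial (Fin e) k) (hf : phi k e f = 0) :
    f ∈ I13 k e he := by
  rcases Submodule.mem_sup.mp (TT_top he f) with ⟨s, hs, g, hg, rfl⟩
  rcases hs with ⟨u, rfl⟩
  have : phi k e (PL k e u) = 0 := by
    rw [map_add] at hf
    rw [I13_le_ker he g hg, add_zero] at hf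
    exact hf
  rw [phi_PL] at this
  subst this
  rw [map_zero, zero_add]
  exact hg

variable (k e) in
/-- The isomorphism between the quotient ring and the model. -/
noncomputable def Phi (he : 2 ≤ e) : (MvPolynomial (Fin e) k ⧸ I13 k e he) ≃+* Am k e := by
  refine RingEquiv.ofBijective (Ideal.Quotient.lift (I13 k e he) (phi k e).toRingHom
    (I13_le_ker he)) ⟨?_, ?_⟩
  · rw [injective_iff_map_eq_zero]
    intro x hx
    obtain ⟨f, rfl⟩ := Ideal.Quotient.mk_surjective x
    rw [Ideal.Quotient.lift_mk] at hx
    rw [Ideal.Quotient.eq_zero_iff_mem]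
    exact ker_phi_le he f hx
  · intro u
    exact ⟨Ideal.Quotient.mk _ (PL k e u), by rw [Ideal.Quotient.lift_mk]; exact phi_PL u⟩

@[simp] lemma Phi_mk (he : 2 ≤ e) (f : MvPolynomial (Fin e) k) :
    Phi k e he (Ideal.Quotient.mk (I13 k e he) f) = phi k e f := by
  simp [Phi, RingEquiv.ofBijective]

end Poly

/-- in `R = k[x₁,…,x_e]/((x₁²) + (xᵢxⱼ : 2 ≤ i ≤ j ≤ e))` the
annihilator of `x₁` is the ideal `(x₁)`; in particular `x₁` is an exact zero
divisor.  Moreover `R` has Hilbert series `1 + eτ + (e-1)τ²` (encoded by: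
`m³ = 0`, `length m² = e - 1`, `length R = 2e`, where `m = (x₁,…,x_e)`). -/
theorem stmt13 (k : Type u) [Field k] (e : ℕ) (he : 2 ≤ e) :
    annIdeal (MvPolynomial (Fin e) k ⧸ I13 k e he)
        (Ideal.Quotient.mk _ (X ⟨0, by omega⟩)) =
      Ideal.span {Ideal.Quotient.mk _ (X ⟨0, by omega⟩)} ∧
    ((Ideal.Quotient.mk (I13 k e he) (X ⟨0, by omega⟩)) ≠ 0 ∧
      ¬ IsUnit (Ideal.Quotient.mk (I13 k e he) (X ⟨0, by omega⟩))) ∧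
    (Ideal.span (Set.range fun i : Fin e =>
        (Ideal.Quotient.mk (I13 k e he) (X i)))) ^ 3 = ⊥ ∧
    moduleLength (MvPolynomial (Fin e) k ⧸ I13 k e he)
        (↥((Ideal.span (Set.range fun i : Fin e =>
          (Ideal.Quotient.mk (I13 k e he) (X i)))) ^ 2)) =
      ((e - 1 : ℕ) : WithBot ℕ∞) ∧
    moduleLength (MvPolynomial (Fin e) k ⧸ I13 k e he)
        (MvPolynomial (Fin e) k ⧸ I13 k e he) =
      ((2 * e : ℕ) : WithBot ℕ∞) := by
  haveI : NeZero e := ⟨by omega⟩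
  have h0 : (⟨0, by omega⟩ : Fin e) = (0 : Fin e) := fin_mk_zero (by omega)
  rw [h0]
  set R := MvPolynomial (Fin e) k ⧸ I13 k e he with hR
  set Φ := Phi k e he with hΦ
  have hq0 : Φ (Ideal.Quotient.mk (I13 k e he) (X (0 : Fin e))) = Am.gen k 0 := by
    rw [hΦ, Phi_mk, phi_X]
  set q0 : R := Ideal.Quotient.mk (I13 k e he) (X (0 : Fin e)) with hq0def
  set mR : Ideal R := Ideal.span (Set.range fun i : Fin e =>
    (Ideal.Quotient.mk (I13 k e he) (X i))) with hmR
  have hmap : Ideal.map Φ mR = Am.mA k e := by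
    rw [hmR, Ideal.map_span, Am.mA]
    congr 1
    rw [← Set.range_comp]
    apply congrArg Set.range
    funext i
    show Φ ((Ideal.Quotient.mk (I13 k e he)) (X i)) = Am.gen k i
    rw [hΦ, Phi_mk, phi_X]
  have hmap2 : Ideal.map Φ (mR ^ 2) = Am.mA k e ^ 2 := by
    rw [Ideal.map_pow, hmap]
  refine ⟨?_, ⟨?_, ?_⟩, ?_, ?_, ?_⟩
  · -- annihilator
    ext x
    rw [annIdeal, LinearMap.mem_ker, LinearMap.mulLeft_apply]
    constructor
    · intro hx
      have h1 : Am.gen k 0 * Φ x = 0 := by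
        rw [← hq0, ← map_mul, hx, map_zero]
      rw [mul_comm] at h1
      rw [Am.mul_gen_zero_eq_zero_iff, ← Am.mem_span_gen_zero_iff,
        Ideal.mem_span_singleton'] at h1
      obtain ⟨v, hv⟩ := h1
      rw [Ideal.mem_span_singleton']
      refine ⟨Φ.symm v, Φ.injective ?_⟩
      rw [map_mul, RingEquiv.apply_symm_apply, hq0, hv]
    · intro hx
      rw [Ideal.mem_span_singleton'] at hx
      obtain ⟨a, rfl⟩ := hx
      apply Φ.injective
      rw [map_mul, map_mul, map_zero, hq0]
      have : Am.gen k 0 * (Φ a * Am.gen k 0) = Φ a * (Am.gen k 0 * Am.gen k 0) := by ring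
      rw [this, Am.gen_zero_sq, mul_zero]
  · -- nonzero
    intro h
    apply Am.gen_zero_ne_zero (k := k) (e := e)
    rw [← hq0, h, map_zero]
  · -- nonunit
    intro h
    apply Am.not_isUnit_gen_zero (k := k) (e := e)
    have := h.map Φ
    rwa [hq0] at this
  · -- cube is zero
    have h3 : Ideal.map Φ (mR ^ 3) = ⊥ := by
      rw [Ideal.map_pow, hmap, Am.mA_cube]
    exact (Ideal.map_eq_bot_iff_of_injective Φ.injective).mp h3
  · -- length of m²
    show Order.krullDim (Submodule R ↥(mR ^ 2)) = ((e - 1 : ℕ) : WithBot ℕ∞)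
    have hg : ∀ x : ↥(mR ^ 2), Φ x.1 ∈ Am.mA k e ^ 2 := by
      intro x
      rw [← hmap2]
      exact Ideal.mem_map_of_mem _ x.2
    have hg' : ∀ y : ↥(Am.mA k e ^ 2), Φ.symm y.1 ∈ mR ^ 2 := by
      intro y
      have hy : (y : Am k e) ∈ Ideal.map Φ (mR ^ 2) := le_of_eq hmap2.symm y.2
      rw [Ideal.mem_map_of_equiv] at hy
      obtain ⟨x, hx, hxy⟩ := hy
      have : Φ.symm y.1 = x := by
        apply Φ.injective
        rw [RingEquiv.apply_symm_apply, hxy]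
      rwa [this]
    let g : ↥(mR ^ 2) ≃+ ↥(Am.mA k e ^ 2) :=
      { toFun := fun x => ⟨Φ x.1, hg x⟩
        invFun := fun y => ⟨Φ.symm y.1, hg' y⟩
        left_inv := fun x => Subtype.ext (by simp)
        right_inv := fun y => Subtype.ext (by simp)
        map_add' := fun x y => Subtype.ext (by simp) }
    have hcompat : ∀ (r : R) (x : ↥(mR ^ 2)), g (r • x) = Φ r • g x := by
      intro r x
      apply Subtype.ext
      show Φ (r • (x : R)) = Φ r • (Φ (x : R))
      rw [smul_eq_mul, smul_eq_mul, map_mul]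
    rw [Order.krullDim_eq_of_orderIso (submoduleOrderIsoOfRingEquiv Φ g hcompat)]
    exact Am.krullDim_submodule_mSq he
  · -- length of R
    show Order.krullDim (Submodule R R) = ((2 * e : ℕ) : WithBot ℕ∞)
    have hcompat : ∀ (r x : R), Φ.toAddEquiv (r • x) = Φ r • Φ.toAddEquiv x := by
      intro r x
      show Φ (r • x) = Φ r • Φ x
      rw [smul_eq_mul, smul_eq_mul, map_mul]
    rw [Order.krullDim_eq_of_orderIso (submoduleOrderIsoOfRingEquiv Φ Φ.toAddEquiv hcompat)]
    exact Am.krullDim_ideal_Am he
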